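/- Let D ⊆ ℂ be the open unit disk, c ∈ ℝ, b > 0. Let u be harmonic on D \ {0} with exp(u(z))/|z|^c → b as z → 0, and let φ be a holomorphic injective map from an open neighborhood W of 0 into D with φ(0) = 0 and φ'(0) ≠ 0. Define v on W \ {0} by v(w) = u(φ(w)) + log|φ'(w)|. Then exp(v(w))/|w|^c → b·|φ'(0)|^{c+1} as w → 0. -/

import Mathlib

open Complex

/-- A function `u : ℂ → ℝ` is harmonic on `s`: twice continuously differentiable with
vanishing Laplacian. -/
def HarmonicOn (u : ℂ → ℝ) (s : Set ℂ) : Prop :=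
  ContDiffOn ℝ 2 u s ∧ ∀ z ∈ s,
    fderiv ℝ (fun w => fderiv ℝ u w 1) z 1 +
      fderiv ℝ (fun w => fderiv ℝ u w Complex.I) z Complex.I = 0

/-- Chart independence of the residue of a singular flat metric: under a holomorphic
change of coordinates `φ` fixing `0`, the transformed representation
`v = u ∘ φ + log |φ'|` satisfies `exp v / |w|^c → b·|φ'(0)|^(c+1)`. -/
theorem stmt8 (c : ℝ) (b : ℝ) (hb : 0 < b) (u : ℂ → ℝ)
    (hu : HarmonicOn u (Metric.ball (0 : ℂ) 1 \ {0}))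
    (hlim : Filter.Tendsto (fun z : ℂ => Real.exp (u z) / ‖z‖ ^ c)
      (nhdsWithin 0 {(0 : ℂ)}ᶜ) (nhds b))
    (W : Set ℂ) (hW : IsOpen W) (h0W : (0 : ℂ) ∈ W)
    (φ : ℂ → ℂ) (hφ : DifferentiableOn ℂ φ W) (hφinj : Set.InjOn φ W)
    (hφ0 : φ 0 = 0) (hφ' : deriv φ 0 ≠ 0)
    (hφmaps : Set.MapsTo φ W (Metric.ball (0 : ℂ) 1))
    (v : ℂ → ℝ)
    (hv : ∀ w ∈ W \ {0}, v w = u (φ w) + Real.log ‖deriv φ w‖) :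
    Filter.Tendsto (fun w : ℂ => Real.exp (v w) / ‖w‖ ^ c)
      (nhdsWithin 0 {(0 : ℂ)}ᶜ) (nhds (b * ‖deriv φ 0‖ ^ (c + 1))) := by
  have hWnhds : W ∈ nhds (0 : ℂ) := hW.mem_nhds h0W
  have hφdiff : DifferentiableAt ℂ φ 0 := hφ.differentiableAt hWnhds
  -- continuity of deriv φ at 0
  have han : AnalyticOnNhd ℂ φ W := hφ.analyticOnNhd hW
  have hφc : ContinuousAt (deriv φ) 0 := ((han.deriv) 0 h0W).continuousAt
  have habs0 : (0 : ℝ) < ‖deriv φ 0‖ := by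
    simpa [norm_pos_iff] using hφ'
  -- tendsto of |deriv φ|
  have htd : Filter.Tendsto (fun w => ‖deriv φ w‖)
      (nhdsWithin 0 {(0 : ℂ)}ᶜ) (nhds (‖deriv φ 0‖)) :=
    (continuous_norm.continuousAt.comp hφc).tendsto.mono_left nhdsWithin_le_nhds
  -- tendsto of φ into nhdsWithin 0 {0}ᶜ
  have hφ0t : Filter.Tendsto φ (nhdsWithin 0 {(0 : ℂ)}ᶜ) (nhds 0) := by
    have := hφdiff.continuousAt.tendsto
    rw [hφ0] at this
    exact this.mono_left nhdsWithin_le_nhds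
  have hev : ∀ᶠ w in nhdsWithin (0 : ℂ) {(0 : ℂ)}ᶜ, w ∈ W ∧ w ≠ 0 := by
    filter_upwards [nhdsWithin_le_nhds hWnhds, self_mem_nhdsWithin] with w h1 h2
    exact ⟨h1, h2⟩
  have hφne : ∀ᶠ w in nhdsWithin (0 : ℂ) {(0 : ℂ)}ᶜ, φ w ≠ 0 := by
    filter_upwards [hev] with w ⟨hwW, hw0⟩ h
    exact hw0 (hφinj hwW h0W (by rw [h, hφ0]))
  have hφt : Filter.Tendsto φ (nhdsWithin 0 {(0 : ℂ)}ᶜ) (nhdsWithin 0 {(0 : ℂ)}ᶜ) := by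
    rw [tendsto_nhdsWithin_iff]
    exact ⟨hφ0t, by filter_upwards [hφne] with w h using h⟩
  -- slope tendsto
  have hslope : Filter.Tendsto (fun w : ℂ => φ w / w)
      (nhdsWithin 0 {(0 : ℂ)}ᶜ) (nhds (deriv φ 0)) := by
    have h := hasDerivAt_iff_tendsto_slope.mp hφdiff.hasDerivAt
    have : (fun w : ℂ => φ w / w) = slope φ 0 := by
      funext w; simp [slope_def_field, hφ0]
    rw [this]; exact h
  have habst : Filter.Tendsto (fun w : ℂ => ‖φ w / w‖)
      (nhdsWithin 0 {(0 : ℂ)}ᶜ) (nhds (‖deriv φ 0‖)) :=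
    (continuous_norm.continuousAt.tendsto).comp hslope
  have hrpow : Filter.Tendsto (fun w : ℂ => ‖φ w / w‖ ^ c)
      (nhdsWithin 0 {(0 : ℂ)}ᶜ) (nhds (‖deriv φ 0‖ ^ c)) :=
    ((Real.continuousAt_rpow_const _ c (Or.inl habs0.ne')).tendsto).comp habst
  have hcomp : Filter.Tendsto (fun w : ℂ => Real.exp (u (φ w)) / ‖φ w‖ ^ c)
      (nhdsWithin 0 {(0 : ℂ)}ᶜ) (nhds b) := hlim.comp hφt
  have hmain : Filter.Tendsto
      (fun w : ℂ => (Real.exp (u (φ w)) / ‖φ w‖ ^ c)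
        * ‖φ w / w‖ ^ c * ‖deriv φ w‖)
      (nhdsWithin 0 {(0 : ℂ)}ᶜ)
      (nhds (b * ‖deriv φ 0‖ ^ c * ‖deriv φ 0‖)) :=
    (hcomp.mul hrpow).mul htd
  have hval : b * ‖deriv φ 0‖ ^ c * ‖deriv φ 0‖
      = b * ‖deriv φ 0‖ ^ (c + 1) := by
    rw [Real.rpow_add habs0, Real.rpow_one]; ring
  rw [← hval]
  refine hmain.congr' ?_
  have hdne : ∀ᶠ w in nhdsWithin (0 : ℂ) {(0 : ℂ)}ᶜ,
      (0 : ℝ) < ‖deriv φ w‖ := htd.eventually (eventually_gt_nhds habs0)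
  filter_upwards [hev, hφne, hdne] with w ⟨hwW, hw0⟩ hφw hdw
  have hvw := hv w ⟨hwW, hw0⟩
  have habsw : (0 : ℝ) < ‖w‖ := by simpa [norm_pos_iff] using hw0
  have habsφw : (0 : ℝ) < ‖φ w‖ := by simpa [norm_pos_iff] using hφw
  rw [hvw, Real.exp_add, Real.exp_log hdw, norm_div,
    Real.div_rpow habsφw.le habsw.le]
  have h1 : ‖φ w‖ ^ c ≠ 0 := (Real.rpow_pos_of_pos habsφw c).ne'
  have h2 : ‖w‖ ^ c ≠ 0 := (Real.rpow_pos_of_pos habsw c).ne'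
  field_simp
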